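/- For a trajectory of the billiard within an ellipse, consecutive segments are tangent to the same conic of the confocal family: if a chord of the ellipse E : x²/a + y²/b = 1 is tangent to the confocal conic C_λ, then the chord obtained by the billiard reflection at the endpoint is also tangent to C_λ. -/

import Mathlib

set_option maxHeartbeats 1600000


/-- Consecutive segments of a billiard trajectory in the ellipse
`E : x²/a + y²/b = 1` are tangent to the same confocal conic `C_λ`:
if the line through a boundary point `P = (px, py) ∈ E` with direction
`v = (vx, vy)` satisfies the tangency condition
`v₂²(a−λ) + v₁²(b−λ) = (v₁ p₂ − v₂ p₁)²` for `C_λ`, then so does the line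
through `P` with the reflected direction `w = v − 2⟨v, nᵤ⟩nᵤ`, where `nᵤ` is
the unit normal of `E` at `P` (here `w = v − 2⟨v,n⟩n/‖n‖²` with
`n = (px/a, py/b)` the gradient normal). -/
theorem billiard_reflection_preserves_caustic
    (a b lam : ℝ) (hab : b < a) (hb : 0 < b)
    (hl : 0 < lam) (hla : lam ≠ a) (hlb : lam ≠ b)
    (px py vx vy : ℝ)
    (hP : px ^ 2 / a + py ^ 2 / b = 1)
    (hv : (vx, vy) ≠ (0, 0))
    (wx wy : ℝ)
    (hwx : wx = vx - 2 * ((vx * (px / a) + vy * (py / b)) /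
        ((px / a) ^ 2 + (py / b) ^ 2)) * (px / a))
    (hwy : wy = vy - 2 * ((vx * (px / a) + vy * (py / b)) /
        ((px / a) ^ 2 + (py / b) ^ 2)) * (py / b))
    (htan : vy ^ 2 * (a - lam) + vx ^ 2 * (b - lam) = (vx * py - vy * px) ^ 2) :
    wy ^ 2 * (a - lam) + wx ^ 2 * (b - lam) = (wx * py - wy * px) ^ 2 := by
  have ha : (0:ℝ) < a := lt_trans hb hab
  have ha' : a ≠ 0 := ne_of_gt ha
  have hb' : b ≠ 0 := ne_of_gt hb
  -- ellipse relation with denominators cleared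
  have hE : b * px ^ 2 + a * py ^ 2 = a * b := by
    field_simp at hP; linarith
  -- the point is not the origin
  have hpq : px ≠ 0 ∨ py ≠ 0 := by
    by_contra h
    push_neg at h
    rw [h.1, h.2] at hP
    norm_num at hP
  -- the gradient normal is nonzero
  have hN : (0:ℝ) < (px / a) ^ 2 + (py / b) ^ 2 := by
    rcases hpq with h | h
    · have h1 : px / a ≠ 0 := div_ne_zero h ha'
      have := pow_pos (abs_pos.mpr h1) 2
      calc (0:ℝ) < |px / a| ^ 2 := this
        _ = (px / a) ^ 2 := by rw [sq_abs]
        _ ≤ (px / a) ^ 2 + (py / b) ^ 2 := by nlinarith [sq_nonneg (py / b)]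
    · have h1 : py / b ≠ 0 := div_ne_zero h hb'
      have := pow_pos (abs_pos.mpr h1) 2
      calc (0:ℝ) < |py / b| ^ 2 := this
        _ = (py / b) ^ 2 := by rw [sq_abs]
        _ ≤ (px / a) ^ 2 + (py / b) ^ 2 := by nlinarith [sq_nonneg (px / a)]
  have hN' : (px / a) ^ 2 + (py / b) ^ 2 ≠ 0 := ne_of_gt hN
  -- scaled reflection formulas
  have hM : (b * px) ^ 2 + (a * py) ^ 2 ≠ 0 := by
    have : (b * px) ^ 2 + (a * py) ^ 2
        = a ^ 2 * b ^ 2 * ((px / a) ^ 2 + (py / b) ^ 2) := by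
      field_simp
    rw [this]
    positivity
  have hMN : (b * px) ^ 2 + (a * py) ^ 2
      = a ^ 2 * b ^ 2 * ((px / a) ^ 2 + (py / b) ^ 2) := by
    field_simp
  have hsx : (vx * (px / a) + vy * (py / b)) / ((px / a) ^ 2 + (py / b) ^ 2) * (px / a)
      = (vx * (b * px) + vy * (a * py)) * (b * px) / ((b * px) ^ 2 + (a * py) ^ 2) := by
    rw [div_mul_eq_mul_div, div_eq_div_iff hN' hM]
    field_simp
  have hsy : (vx * (px / a) + vy * (py / b)) / ((px / a) ^ 2 + (py / b) ^ 2) * (py / b)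
      = (vx * (b * px) + vy * (a * py)) * (a * py) / ((b * px) ^ 2 + (a * py) ^ 2) := by
    rw [div_mul_eq_mul_div, div_eq_div_iff hN' hM]
    field_simp
  have hwx' : wx * ((b * px) ^ 2 + (a * py) ^ 2)
      = ((b * px) ^ 2 + (a * py) ^ 2) * vx
        - 2 * (vx * (b * px) + vy * (a * py)) * (b * px) := by
    rw [hwx, mul_assoc, hsx]
    simp only [sub_mul, mul_assoc, div_mul_cancel₀ _ hM]
    ring
  have hwy' : wy * ((b * px) ^ 2 + (a * py) ^ 2)
      = ((b * px) ^ 2 + (a * py) ^ 2) * vy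
        - 2 * (vx * (b * px) + vy * (a * py)) * (a * py) := by
    rw [hwy, mul_assoc, hsy]
    simp only [sub_mul, mul_assoc, div_mul_cancel₀ _ hM]
    ring
  -- key polynomial identity after multiplying through by M²
  have key : ((b * px) ^ 2 + (a * py) ^ 2) ^ 2 *
      (wy ^ 2 * (a - lam) + wx ^ 2 * (b - lam) - (wx * py - wy * px) ^ 2) = 0 := by
    set M : ℝ := (b * px) ^ 2 + (a * py) ^ 2 with hMdef
    set S : ℝ := vx * (b * px) + vy * (a * py) with hSdef
    have wX : M * vx - 2 * S * (b * px) = wx * M := hwx'.symm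
    have wY : M * vy - 2 * S * (a * py) = wy * M := hwy'.symm
    linear_combination
      ((M * wx + (M * vx - 2 * S * (b * px))) * (b - lam)
        - py * ((M * wx * py - M * wy * px)
          + ((M * vx - 2 * S * (b * px)) * py - (M * vy - 2 * S * (a * py)) * px)))
        * hwx'
      + ((M * wy + (M * vy - 2 * S * (a * py))) * (a - lam)
        + px * ((M * wx * py - M * wy * px)
          + ((M * vx - 2 * S * (b * px)) * py - (M * vy - 2 * S * (a * py)) * px)))
        * hwy'
      + M ^ 2 * htan
      + ((-4) * b^3 * px^3 * py * vx * vy + (-4) * a * b^2 * px^2 * py^2 * vy^2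
        + 4 * a * b^2 * px^2 * py^2 * vx^2 + 4 * a * b^2 * px^3 * py * vx * vy
        + 4 * a^2 * b * px * py^3 * vx * vy + 4 * a^2 * b * px^2 * py^2 * vy^2
        + (-4) * a^2 * b * px^2 * py^2 * vx^2 + (-4) * a^3 * px * py^3 * vx * vy) * hE
  have hM2 : ((b * px) ^ 2 + (a * py) ^ 2) ^ 2 ≠ 0 := pow_ne_zero _ hM
  have := (mul_eq_zero.mp key).resolve_left hM2
  linarith
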